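/- arXiv:2409.03505 — 2 statements merged into one kernel-verified Lean document; each statement's English description precedes it below -/
import Mathlib

section
/- Fix q ∈ (0,1) and let F be the CDF of a probability distribution on [0,∞) with finite mean. Let F̂ be the empirical CDF of n IID samples from F and let â = inf{a ≥ 0 : F̂(a) ≥ q} be the SAA decision. Then the expected additive regret satisfies E[L(â)] − L(a*) = ∫₀^{a*} (q − F(z))·Pr[F̂(z) ≥ q] dz + ∫_{a*}^∞ (F(z) − q)·Pr[F̂(z) < q] dz. -/
open MeasureTheory Set
open scoped ENNReal

noncomputable section

/-- The Newsvendor loss `ℓ(a,Z) = q·max{Z−a,0} + (1−q)·max{a−Z,0}` with critical quantile `q`. -/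
def nvLoss (q a z : ℝ) : ℝ := q * max (z - a) 0 + (1 - q) * max (a - z) 0

/-- The expected Newsvendor loss `L(a)` under the demand distribution `μ`. -/
def expLoss (q : ℝ) (μ : Measure ℝ) (a : ℝ) : ℝ := ∫ z, nvLoss q a z ∂μ

/-- The CDF of the demand distribution `μ`. -/
def cdf' (μ : Measure ℝ) (z : ℝ) : ℝ := (μ (Iic z)).toReal

/-- The optimal decision `a* = inf {a ≥ 0 : F(a) ≥ q}`. -/
def optDec (q : ℝ) (μ : Measure ℝ) : ℝ := sInf {a : ℝ | 0 ≤ a ∧ q ≤ cdf' μ a}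

/-- The empirical CDF of the samples `ω : Fin n → ℝ`. -/
def empCdf (n : ℕ) (ω : Fin n → ℝ) (z : ℝ) : ℝ :=
  (∑ i : Fin n, if ω i ≤ z then (1 : ℝ) else 0) / n

/-- The SAA (sample average approximation) decision `â = inf {a ≥ 0 : F̂(a) ≥ q}`. -/
def saa (q : ℝ) (n : ℕ) (ω : Fin n → ℝ) : ℝ := sInf {a : ℝ | 0 ≤ a ∧ q ≤ empCdf n ω a}

/-- The joint law of `n` iid samples from `μ`. -/
def iid (μ : Measure ℝ) (n : ℕ) : Measure (Fin n → ℝ) := Measure.pi fun _ => μ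

/-- A distribution `μ` is `(β,γ,ζ)`-clustered if
`|a − a*| ≤ (1/γ)·|F(a) − q|^{1/(β+1)}` for all `a ∈ [a*−ζ, a*+ζ]`. -/
def Clustered (q β γ ζ : ℝ) (μ : Measure ℝ) : Prop :=
  ∀ a ∈ Icc (optDec q μ - ζ) (optDec q μ + ζ),
    |a - optDec q μ| ≤ (1 / γ) * |cdf' μ a - q| ^ ((1 : ℝ) / (β + 1))

namespace NVAux

/-! ### empirical CDF basics -/

lemma empCdf_mono {n : ℕ} (ω : Fin n → ℝ) : Monotone (empCdf n ω) := by
  intro s t hst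
  unfold empCdf
  have hsum : (∑ i : Fin n, if ω i ≤ s then (1:ℝ) else 0)
      ≤ ∑ i : Fin n, if ω i ≤ t then (1:ℝ) else 0 := by
    refine Finset.sum_le_sum fun i _ => ?_
    split_ifs with h1 h2
    · exact le_refl _
    · exact absurd (h1.trans hst) h2
    · norm_num
    · exact le_refl _
  simp only [div_eq_mul_inv]
  exact mul_le_mul_of_nonneg_right hsum (inv_nonneg.mpr (Nat.cast_nonneg n))

lemma empCdf_eq_one {n : ℕ} (hn : 1 ≤ n) (ω : Fin n → ℝ) {M : ℝ} (hM : ∀ i, ω i ≤ M) :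
    empCdf n ω M = 1 := by
  unfold empCdf
  rw [Finset.sum_congr rfl (fun i _ => if_pos (hM i))]
  simp
  omega

lemma exists_gap {n : ℕ} (ω : Fin n → ℝ) (c : ℝ) :
    ∃ ε > 0, ∀ i, ω i ∉ Ioc c (c + ε) := by
  classical
  by_cases h : ∃ i, c < ω i
  · set T : Finset (Fin n) := Finset.univ.filter (fun i => c < ω i) with hT
    have hTne : T.Nonempty := ⟨h.choose, by simp [hT, h.choose_spec]⟩
    set m := T.inf' hTne (fun i => ω i - c) with hm
    have hm0 : 0 < m := by
      rw [hm, Finset.lt_inf'_iff]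
      intro i hi
      simp only [hT, Finset.mem_filter] at hi
      linarith [hi.2]
    refine ⟨m / 2, by linarith, fun i hi => ?_⟩
    have hiT : i ∈ T := by simp [hT, hi.1]
    have := Finset.inf'_le (fun i => ω i - c) hiT
    have h2 := hi.2
    linarith
  · push_neg at h
    exact ⟨1, one_pos, fun i hi => absurd hi.1 (not_lt.mpr (h i))⟩

lemma empCdf_eq_of_gap {n : ℕ} (ω : Fin n → ℝ) {c d : ℝ} (hcd : c ≤ d)
    (hgap : ∀ i, ω i ∉ Ioc c d) : empCdf n ω d = empCdf n ω c := by
  unfold empCdf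
  congr 1
  refine Finset.sum_congr rfl fun i _ => ?_
  by_cases h : ω i ≤ c
  · rw [if_pos (h.trans hcd), if_pos h]
  · rw [if_neg h, if_neg fun h' => (hgap i) ⟨lt_of_not_ge h, h'⟩]

variable {q : ℝ} {n : ℕ}

lemma saaSet_nonempty (hq1 : q ≤ 1) (hn : 1 ≤ n) (ω : Fin n → ℝ) :
    {a : ℝ | 0 ≤ a ∧ q ≤ empCdf n ω a}.Nonempty := by
  classical
  refine ⟨∑ i, max (ω i) 0, Finset.sum_nonneg fun i _ => le_max_right _ _, ?_⟩
  rw [empCdf_eq_one hn ω (M := ∑ i, max (ω i) 0) fun i => ?_]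
  · exact hq1
  · calc ω i ≤ max (ω i) 0 := le_max_left _ _
      _ ≤ ∑ j, max (ω j) 0 :=
        Finset.single_le_sum (f := fun j => max (ω j) 0)
          (fun j _ => le_max_right _ _) (Finset.mem_univ i)

lemma saa_nonneg (hq1 : q ≤ 1) (hn : 1 ≤ n) (ω : Fin n → ℝ) : 0 ≤ saa q n ω :=
  le_csInf (saaSet_nonempty hq1 hn ω) fun _ hb => hb.1

lemma saa_le_iff (hq1 : q ≤ 1) (hn : 1 ≤ n) (ω : Fin n → ℝ) {t : ℝ} (ht : 0 ≤ t) :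
    saa q n ω ≤ t ↔ q ≤ empCdf n ω t := by
  constructor
  · intro h
    obtain ⟨ε, hε, hgap⟩ := exists_gap ω t
    obtain ⟨a, ⟨ha0, haq⟩, hat⟩ :=
      exists_lt_of_csInf_lt (saaSet_nonempty hq1 hn ω)
        (show saa q n ω < t + ε from lt_of_le_of_lt h (by linarith))
    rcases le_total a t with h3 | h3
    · exact haq.trans (empCdf_mono ω h3)
    · have : empCdf n ω a = empCdf n ω t :=
        empCdf_eq_of_gap ω h3 fun i hi => hgap i ⟨hi.1, hi.2.trans hat.le⟩
      exact this ▸ haq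
  · intro h
    exact csInf_le ⟨0, fun x hx => hx.1⟩ ⟨ht, h⟩

lemma saa_le_sumBound (hq1 : q ≤ 1) (hn : 1 ≤ n) (ω : Fin n → ℝ) :
    saa q n ω ≤ ∑ i, max (ω i) 0 := by
  refine csInf_le ⟨0, fun x hx => hx.1⟩ ?_
  refine ⟨Finset.sum_nonneg fun i _ => le_max_right _ _, ?_⟩
  rw [empCdf_eq_one hn ω (M := ∑ i, max (ω i) 0) fun i => ?_]
  · exact hq1
  · calc ω i ≤ max (ω i) 0 := le_max_left _ _
      _ ≤ ∑ j, max (ω j) 0 :=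
        Finset.single_le_sum (f := fun j => max (ω j) 0)
          (fun j _ => le_max_right _ _) (Finset.mem_univ i)

/-! ### true CDF basics -/

variable {μ : Measure ℝ}

lemma cdf'_mono [IsProbabilityMeasure μ] : Monotone (cdf' μ) := fun s t hst =>
  ENNReal.toReal_mono (measure_ne_top μ _) (measure_mono (Iic_subset_Iic.mpr hst))

lemma cdf'_nonneg (t : ℝ) : 0 ≤ cdf' μ t := ENNReal.toReal_nonneg

lemma cdf'_le_one [IsProbabilityMeasure μ] (t : ℝ) : cdf' μ t ≤ 1 := by
  unfold cdf'
  rw [show (1:ℝ) = (1 : ℝ≥0∞).toReal by simp]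
  exact ENNReal.toReal_mono ENNReal.one_ne_top prob_le_one

lemma optSet_nonempty [IsProbabilityMeasure μ] (hq0 : 0 ≤ q) (hq : q < 1) :
    {a : ℝ | 0 ≤ a ∧ q ≤ cdf' μ a}.Nonempty := by
  have h1 : Filter.Tendsto (fun x => μ (Iic x)) Filter.atTop (nhds (μ univ)) :=
    tendsto_measure_Iic_atTop μ
  have h2 : ENNReal.ofReal q < μ univ := by
    rw [measure_univ]
    exact lt_of_lt_of_le (ENNReal.ofReal_lt_one.mpr hq) le_rfl
  have h3 : ∀ᶠ x in Filter.atTop, ENNReal.ofReal q < μ (Iic x) :=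
    h1.eventually_const_lt h2
  obtain ⟨x, hxq, hx0⟩ := (h3.and (Filter.eventually_ge_atTop (0:ℝ))).exists
  refine ⟨x, hx0, ?_⟩
  have := ENNReal.toReal_mono (measure_ne_top μ _) hxq.le
  rwa [ENNReal.toReal_ofReal hq0] at this

lemma optDec_nonneg [IsProbabilityMeasure μ] (hq0 : 0 ≤ q) (hq : q < 1) :
    0 ≤ optDec q μ :=
  le_csInf (optSet_nonempty hq0 hq) fun _ hb => hb.1

lemma cdf'_lt_of_lt_optDec [IsProbabilityMeasure μ] {t : ℝ} (ht : 0 ≤ t)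
    (h : t < optDec q μ) : cdf' μ t < q := by
  by_contra hc
  have hmem : t ∈ {a : ℝ | 0 ≤ a ∧ q ≤ cdf' μ a} := ⟨ht, not_lt.mp hc⟩
  exact absurd (csInf_le ⟨0, fun x hx => hx.1⟩ hmem) (not_le.mpr h)

lemma le_cdf'_of_optDec_lt [IsProbabilityMeasure μ] (hq0 : 0 ≤ q) (hq : q < 1)
    {t : ℝ} (h : optDec q μ < t) : q ≤ cdf' μ t := by
  obtain ⟨a, ha, hat⟩ := exists_lt_of_csInf_lt (optSet_nonempty hq0 hq) h
  exact ha.2.trans (cdf'_mono hat.le)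


/-! ### the loss difference identity -/

lemma vol_sec {b a : ℝ} (hba : b ≤ a) (z : ℝ) :
    volume (Ioc b a ∩ Ici z) = ENNReal.ofReal (max a z - max b z) := by
  rcases le_or_gt z b with h | h
  · have hs : Ioc b a ∩ Ici z = Ioc b a := inter_eq_left.mpr fun t ht => h.trans ht.1.le
    rw [hs, Real.volume_Ioc, max_eq_left (h.trans hba), max_eq_left h]
  · rcases le_or_gt z a with h2 | h2
    · have hs : Ioc b a ∩ Ici z = Icc z a := by
        ext t
        simp only [mem_inter_iff, mem_Ioc, mem_Ici, mem_Icc]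
        exact ⟨fun ht => ⟨ht.2, ht.1.2⟩, fun ht => ⟨⟨h.trans_le ht.1, ht.2⟩, ht.1⟩⟩
      rw [hs, Real.volume_Icc, max_eq_left h2, max_eq_right h.le]
    · have hs : Ioc b a ∩ Ici z = ∅ := by
        ext t
        simp only [mem_inter_iff, mem_Ioc, mem_Ici, mem_empty_iff_false, iff_false, not_and]
        rintro ⟨_, ht2⟩ ht3
        exact absurd (ht3.trans ht2) (not_le.mpr h2)
      rw [hs, max_eq_right h2.le, max_eq_right (hba.trans h2.le)]
      simp

lemma nvLoss_sub (q a b z : ℝ) :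
    nvLoss q a z - nvLoss q b z = q * (b - a) + (max a z - max b z) := by
  unfold nvLoss
  have h1 : ∀ c : ℝ, max (z - c) 0 = max z c - c := by
    intro c; rcases le_total z c with h | h
    · simp [max_eq_right (sub_nonpos.mpr h), max_eq_right h]
    · simp [max_eq_left (sub_nonneg.mpr h), max_eq_left h]
  have h2 : ∀ c : ℝ, max (c - z) 0 = max c z - z := by
    intro c; rcases le_total c z with h | h
    · simp [max_eq_right (sub_nonpos.mpr h), max_eq_right h]
    · simp [max_eq_left (sub_nonneg.mpr h), max_eq_left h]
  rw [h1 a, h1 b, h2 a, h2 b, max_comm z a, max_comm z b]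
  ring

lemma integrable_nvLoss {μ : Measure ℝ} [IsProbabilityMeasure μ]
    (hmean : Integrable (fun z => z) μ) (q a : ℝ) :
    Integrable (fun z => nvLoss q a z) μ := by
  have h1 : Integrable (fun z => max (z - a) 0) μ := by
    have := (hmean.sub (integrable_const a)).sup (integrable_const 0)
    exact this
  have h2 : Integrable (fun z => max (a - z) 0) μ := by
    have := ((integrable_const a).sub hmean).sup (integrable_const 0)
    exact this
  exact (h1.const_mul q).add (h2.const_mul (1 - q))

lemma lossDiff {μ : Measure ℝ} [IsProbabilityMeasure μ]
    (hmean : Integrable (fun z => z) μ) (q : ℝ) {a b : ℝ} (hba : b ≤ a) :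
    expLoss q μ a - expLoss q μ b = ∫ t in Ioc b a, (cdf' μ t - q) := by
  have hmaxcont : Continuous fun z : ℝ => max a z - max b z :=
    (continuous_const.max continuous_id).sub (continuous_const.max continuous_id)
  have hmax : Integrable (fun z => max a z - max b z) μ := by
    refine Integrable.mono' (integrable_const (a - b)) hmaxcont.aestronglyMeasurable ?_
    refine Filter.Eventually.of_forall fun z => ?_
    have h1 : max b z ≤ max a z := max_le_max hba le_rfl
    have h2 : max a z - max b z ≤ a - b := by
      rcases le_total z b with h | h
      · rw [max_eq_left (h.trans hba), max_eq_left h]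
      · rcases le_total z a with h' | h'
        · rw [max_eq_left h', max_eq_right h]; linarith
        · rw [max_eq_right h', max_eq_right h]; linarith
    rw [Real.norm_eq_abs, abs_of_nonneg (by linarith)]
    exact h2
  have hnn : ∀ z, 0 ≤ max a z - max b z := fun z => sub_nonneg.mpr (max_le_max hba le_rfl)
  -- step 1 : difference of integrals
  have e1 : expLoss q μ a - expLoss q μ b
      = ∫ z, (nvLoss q a z - nvLoss q b z) ∂μ := by
    rw [expLoss, expLoss, ← integral_sub (integrable_nvLoss hmean q a) (integrable_nvLoss hmean q b)]
  have e2 : ∫ z, (nvLoss q a z - nvLoss q b z) ∂μ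
      = q * (b - a) + ∫ z, (max a z - max b z) ∂μ := by
    rw [show (fun z => nvLoss q a z - nvLoss q b z)
        = fun z => q * (b - a) + (max a z - max b z) from funext fun z => nvLoss_sub q a b z]
    rw [integral_add (integrable_const _) hmax, integral_const]
    simp
  -- step 2 : the middle integral via product measures
  have hseta : MeasurableSet {p : ℝ × ℝ | p.2 ∈ Ioc b a ∧ p.1 ≤ p.2} := by
    refine MeasurableSet.inter ?_ ?_
    · exact measurable_snd measurableSet_Ioc
    · exact measurableSet_le measurable_fst measurable_snd
  have e3 : ∫ z, (max a z - max b z) ∂μ = ∫ t in Ioc b a, cdf' μ t := by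
    rw [integral_eq_lintegral_of_nonneg_ae (Filter.Eventually.of_forall hnn)
      hmaxcont.aestronglyMeasurable]
    have hcdfm : Measurable (cdf' μ) := (cdf'_mono (μ := μ)).measurable
    rw [integral_eq_lintegral_of_nonneg_ae (Filter.Eventually.of_forall fun t => cdf'_nonneg (μ := μ) t)
      hcdfm.aestronglyMeasurable]
    congr 1
    calc ∫⁻ z, ENNReal.ofReal (max a z - max b z) ∂μ
        = ∫⁻ z, volume (Ioc b a ∩ Ici z) ∂μ := by
          refine lintegral_congr fun z => ?_
          rw [vol_sec hba z]
      _ = (μ.prod volume) {p : ℝ × ℝ | p.2 ∈ Ioc b a ∧ p.1 ≤ p.2} := by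
          rw [Measure.prod_apply hseta]
          refine (lintegral_congr fun z => ?_).symm
          congr 1
      _ = ∫⁻ t, μ ((fun z => (z, t)) ⁻¹' {p : ℝ × ℝ | p.2 ∈ Ioc b a ∧ p.1 ≤ p.2}) ∂volume :=
          Measure.prod_apply_symm hseta
      _ = ∫⁻ t, (Ioc b a).indicator (fun t => μ (Iic t)) t ∂volume := by
          refine lintegral_congr fun t => ?_
          by_cases ht : t ∈ Ioc b a
          · rw [indicator_of_mem ht]
            congr 1
            ext z
            simp only [mem_preimage, mem_setOf_eq, mem_Iic, ht, true_and]
          · rw [indicator_of_notMem ht]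
            have : ((fun z => (z, t)) ⁻¹' {p : ℝ × ℝ | p.2 ∈ Ioc b a ∧ p.1 ≤ p.2}) = ∅ := by
              ext z; simp only [mem_preimage, mem_setOf_eq, mem_empty_iff_false, iff_false]
              exact fun hc => ht hc.1
            rw [this, measure_empty]
      _ = ∫⁻ t in Ioc b a, μ (Iic t) ∂volume := lintegral_indicator measurableSet_Ioc _
      _ = ∫⁻ t in Ioc b a, ENNReal.ofReal (cdf' μ t) ∂volume := by
          refine setLIntegral_congr_fun measurableSet_Ioc (fun t _ => ?_)
          rw [cdf', ENNReal.ofReal_toReal (measure_ne_top μ _)]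
  -- step 3 : combine
  have e4 : ∫ t in Ioc b a, (cdf' μ t - q) = (∫ t in Ioc b a, cdf' μ t) - q * (a - b) := by
    have hfin : IsFiniteMeasure (volume.restrict (Ioc b a)) := by
      constructor
      rw [Measure.restrict_apply_univ, Real.volume_Ioc]
      exact ENNReal.ofReal_lt_top
    have hcdfint : Integrable (cdf' μ) (volume.restrict (Ioc b a)) := by
      refine Integrable.mono' (integrable_const 1) (cdf'_mono (μ := μ)).measurable.aestronglyMeasurable ?_
      refine Filter.Eventually.of_forall fun t => ?_
      rw [Real.norm_eq_abs, abs_of_nonneg (cdf'_nonneg t)]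
      exact cdf'_le_one (μ := μ) t
    rw [integral_sub hcdfint (integrable_const q), integral_const]
    simp only [Measure.restrict_apply_univ, Real.volume_Ioc, smul_eq_mul]
    rw [Measure.real, Measure.restrict_apply_univ, Real.volume_Ioc, ENNReal.toReal_ofReal (by linarith)]
    ring
  rw [e1, e2, e3, e4]
  ring


/-! ### iid and measurability -/

lemma iid_isProb {μ : Measure ℝ} [IsProbabilityMeasure μ] {n : ℕ} :
    IsProbabilityMeasure (iid μ n) := by
  rw [iid]; infer_instance

lemma eval_measurePreserving {μ : Measure ℝ} [IsProbabilityMeasure μ] {n : ℕ} (i : Fin n) :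
    MeasurePreserving (fun ω : Fin n → ℝ => ω i) (iid μ n) μ := by
  classical
  refine ⟨measurable_pi_apply i, ?_⟩
  ext s hs
  rw [Measure.map_apply (measurable_pi_apply i) hs, iid]
  have : (fun ω : Fin n → ℝ => ω i) ⁻¹' s
      = Set.pi univ (Function.update (fun _ => (univ : Set ℝ)) i s) :=
    Set.eval_preimage
  rw [this, Measure.pi_pi]
  rw [Finset.prod_eq_single i (fun j _ hj => by simp [Function.update_of_ne hj])
    (fun h => absurd (Finset.mem_univ i) h)]
  simp

lemma measurable_empCdf_prod {n : ℕ} :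
    Measurable fun p : (Fin n → ℝ) × ℝ => empCdf n p.1 p.2 := by
  unfold empCdf
  apply Measurable.div_const
  apply Finset.measurable_sum
  intro i _
  exact Measurable.ite
    (measurableSet_le (measurable_fst.eval) measurable_snd)
    measurable_const measurable_const

lemma measurable_empCdf {n : ℕ} (t : ℝ) :
    Measurable fun ω : Fin n → ℝ => empCdf n ω t :=
  measurable_empCdf_prod.comp (measurable_id.prodMk measurable_const)

/-! ### pointwise regret identity -/

lemma key_pointwise {q : ℝ} (hq1 : q < 1) {μ : Measure ℝ} [IsProbabilityMeasure μ]
    (hq0 : 0 ≤ q) (hmean : Integrable (fun z => z) μ) {n : ℕ} (hn : 1 ≤ n) (ω : Fin n → ℝ) :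
    expLoss q μ (saa q n ω) - expLoss q μ (optDec q μ)
      = (∫ t in Ioc 0 (optDec q μ),
            (q - cdf' μ t) * (if q ≤ empCdf n ω t then (1:ℝ) else 0))
        + ∫ t in Ioi (optDec q μ),
            (cdf' μ t - q) * (if empCdf n ω t < q then (1:ℝ) else 0) := by
  set c := optDec q μ with hcdef
  set d := saa q n ω with hddef
  have hc0 : 0 ≤ c := optDec_nonneg hq0 hq1
  have hd0 : 0 ≤ d := saa_nonneg hq1.le hn ω
  rcases le_total c d with hcd | hdc
  · -- case c ≤ d
    have h1 : (∫ t in Ioc 0 c, (q - cdf' μ t) * (if q ≤ empCdf n ω t then (1:ℝ) else 0)) = 0 := by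
      rw [← Measure.restrict_congr_set (Ioo_ae_eq_Ioc (μ := volume) (a := (0:ℝ)) (b := c))]
      rw [setIntegral_congr_fun measurableSet_Ioo (g := fun _ => (0:ℝ)) ?_]
      · simp
      · intro t ht
        have h4 : ¬ d ≤ t := not_le.mpr (lt_of_lt_of_le ht.2 hcd)
        have h5 : ¬ q ≤ empCdf n ω t := fun hc' =>
          h4 ((saa_le_iff hq1.le hn ω ht.1.le).mpr hc')
        simp [h5]
    have h2 : (∫ t in Ioi c, (cdf' μ t - q) * (if empCdf n ω t < q then (1:ℝ) else 0))
        = ∫ t in Ioc c d, (cdf' μ t - q) := by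
      rw [setIntegral_congr_fun measurableSet_Ioi
        (g := fun t => (Iio d).indicator (fun t => cdf' μ t - q) t) ?_]
      · rw [setIntegral_indicator measurableSet_Iio, Ioi_inter_Iio,
          Measure.restrict_congr_set (Ioo_ae_eq_Ioc (μ := volume) (a := c) (b := d))]
      · intro t ht
        have ht0 : (0:ℝ) ≤ t := hc0.trans (le_of_lt ht)
        dsimp only
        by_cases h : t < d
        · have h6 : ¬ q ≤ empCdf n ω t := fun hc' =>
            absurd ((saa_le_iff hq1.le hn ω ht0).mpr hc') (not_le.mpr h)
          rw [if_pos (not_le.mp h6), indicator_of_mem (mem_Iio.mpr h), mul_one]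
        · have h7 : q ≤ empCdf n ω t := by
            have := (saa_le_iff hq1.le hn ω ht0).mp (not_lt.mp h)
            exact this
          rw [if_neg (not_lt.mpr h7), indicator_of_notMem (fun hmem => h (mem_Iio.mp hmem)), mul_zero]
    rw [h1, h2, zero_add]
    exact lossDiff hmean q hcd
  · -- case d ≤ c
    have h2 : (∫ t in Ioi c, (cdf' μ t - q) * (if empCdf n ω t < q then (1:ℝ) else 0)) = 0 := by
      rw [setIntegral_congr_fun measurableSet_Ioi (g := fun _ => (0:ℝ)) ?_]
      · simp
      · intro t ht
        have ht0 : (0:ℝ) ≤ t := hc0.trans (le_of_lt ht)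
        have h7 : q ≤ empCdf n ω t :=
          (saa_le_iff hq1.le hn ω ht0).mp (hdc.trans (le_of_lt ht))
        dsimp only
        rw [if_neg (not_lt.mpr h7), mul_zero]
    have h1 : (∫ t in Ioc 0 c, (q - cdf' μ t) * (if q ≤ empCdf n ω t then (1:ℝ) else 0))
        = ∫ t in Ioc d c, (q - cdf' μ t) := by
      rw [setIntegral_congr_fun measurableSet_Ioc
        (g := fun t => (Ici d).indicator (fun t => q - cdf' μ t) t) ?_]
      · rw [setIntegral_indicator measurableSet_Ici]
        refine setIntegral_congr_set ?_
        rw [MeasureTheory.ae_eq_set]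
        constructor
        · refine measure_mono_null (t := {d}) (fun t ht' => ?_) Real.volume_singleton
          have h8 : t ≤ d := by
            by_contra hcon
            exact ht'.2 ⟨not_le.mp hcon, ht'.1.1.2⟩
          exact le_antisymm h8 ht'.1.2
        · have hemp : Ioc d c \ (Ioc 0 c ∩ Ici d) = ∅ := by
            refine eq_empty_iff_forall_notMem.mpr fun t ht' => ?_
            exact ht'.2 ⟨⟨lt_of_le_of_lt hd0 ht'.1.1, ht'.1.2⟩, ht'.1.1.le⟩
          rw [hemp, measure_empty]
      · intro t ht
        dsimp only
        by_cases h : d ≤ t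
        · rw [if_pos ((saa_le_iff hq1.le hn ω ht.1.le).mp h), indicator_of_mem (mem_Ici.mpr h), mul_one]
        · have h6 : ¬ q ≤ empCdf n ω t := fun hc' =>
            h ((saa_le_iff hq1.le hn ω ht.1.le).mpr hc')
          rw [if_neg h6, indicator_of_notMem (fun hmem => h (mem_Ici.mp hmem)), mul_zero]
    have hLD := lossDiff hmean q hdc
    have hneg : (∫ t in Ioc d c, (q - cdf' μ t))
        = - ∫ t in Ioc d c, (cdf' μ t - q) := by
      rw [← integral_neg]
      congr 1
      funext t
      ring
    rw [h1, h2, add_zero, hneg, ← hLD]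
    ring

end NVAux

open NVAux

/-- For `q ∈ (0,1)`, a probability distribution `μ` on `[0,∞)` with finite mean,
and the SAA decision `â` based on `n` iid samples, the expected additive regret satisfies
`E[L(â)] − L(a*) = ∫₀^{a*} (q−F(z))·Pr[F̂(z) ≥ q] dz + ∫_{a*}^∞ (F(z)−q)·Pr[F̂(z) < q] dz`. -/
theorem newsvendor_expected_regret_formula
    (q : ℝ) (hq : q ∈ Ioo (0:ℝ) 1)
    (μ : Measure ℝ) [IsProbabilityMeasure μ] (hsupp : μ (Iio 0) = 0)
    (hmean : Integrable (fun z => z) μ)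
    (n : ℕ) (hn : 1 ≤ n) :
    (∫ ω, expLoss q μ (saa q n ω) ∂(iid μ n)) - expLoss q μ (optDec q μ)
      = (∫ z in (0:ℝ)..(optDec q μ),
            (q - cdf' μ z) * ((iid μ n) {ω | q ≤ empCdf n ω z}).toReal)
        + ∫ z in Ioi (optDec q μ),
            (cdf' μ z - q) * ((iid μ n) {ω | empCdf n ω z < q}).toReal := by
  classical
  obtain ⟨hq0, hq1⟩ := hq
  haveI hPi : IsProbabilityMeasure (iid μ n) := iid_isProb
  set c := optDec q μ with hcdef
  have hc0 : 0 ≤ c := optDec_nonneg hq0.le hq1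
  set P := iid μ n with hPdef
  set f1 : (Fin n → ℝ) × ℝ → ℝ :=
    fun p => (q - cdf' μ p.2) * (if q ≤ empCdf n p.1 p.2 then (1:ℝ) else 0) with hf1def
  set f2 : (Fin n → ℝ) × ℝ → ℝ :=
    fun p => (cdf' μ p.2 - q) * (if empCdf n p.1 p.2 < q then (1:ℝ) else 0) with hf2def
  have hms1 : ∀ t : ℝ, MeasurableSet {ω : Fin n → ℝ | q ≤ empCdf n ω t} := fun t =>
    measurableSet_le measurable_const (measurable_empCdf t)
  have hms2 : ∀ t : ℝ, MeasurableSet {ω : Fin n → ℝ | empCdf n ω t < q} := fun t =>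
    measurableSet_lt (measurable_empCdf t) measurable_const
  have hcdfm : Measurable (cdf' μ) := (cdf'_mono (μ := μ)).measurable
  have hm1 : Measurable f1 := by
    refine Measurable.mul (measurable_const.sub (hcdfm.comp measurable_snd)) ?_
    exact Measurable.ite (measurableSet_le measurable_const measurable_empCdf_prod)
      measurable_const measurable_const
  have hm2 : Measurable f2 := by
    refine Measurable.mul ((hcdfm.comp measurable_snd).sub measurable_const) ?_
    exact Measurable.ite (measurableSet_lt measurable_empCdf_prod measurable_const)
      measurable_const measurable_const
  have hb1 : ∀ t : ℝ, |q - cdf' μ t| ≤ 1 := by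
    intro t
    rw [abs_le]
    constructor
    · have := cdf'_le_one (μ := μ) t; linarith
    · have := cdf'_nonneg (μ := μ) t; linarith
  have hb2 : ∀ t : ℝ, |cdf' μ t - q| ≤ 1 := by
    intro t
    rw [abs_sub_comm]; exact hb1 t
  -- integrability of f1 on the finite product measure
  haveI hfin1 : IsFiniteMeasure (volume.restrict (Ioc (0:ℝ) c)) := by
    constructor
    rw [Measure.restrict_apply_univ, Real.volume_Ioc]
    exact ENNReal.ofReal_lt_top
  have hIf1 : Integrable f1 (P.prod (volume.restrict (Ioc (0:ℝ) c))) := by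
    refine Integrable.mono' (integrable_const 1) hm1.aestronglyMeasurable ?_
    refine Filter.Eventually.of_forall fun p => ?_
    rw [Real.norm_eq_abs, abs_mul]
    refine mul_le_one₀ (hb1 p.2) (abs_nonneg _) ?_
    split_ifs <;> simp
  -- integrability of f2
  have hIf2 : Integrable f2 (P.prod (volume.restrict (Ioi c))) := by
    refine ⟨hm2.aestronglyMeasurable, ?_⟩
    show (∫⁻ p, ‖f2 p‖₊ ∂(P.prod (volume.restrict (Ioi c)))) < ⊤
    rw [lintegral_prod _ hm2.nnnorm.coe_nnreal_ennreal.aemeasurable]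
    have hbound : ∀ ω : Fin n → ℝ,
        (∫⁻ t in Ioi c, (‖f2 (ω, t)‖₊ : ℝ≥0∞) ∂volume)
          ≤ ENNReal.ofReal (∑ i, max (ω i) 0) := by
      intro ω
      have h1 : (∫⁻ t in Ioi c, (‖f2 (ω, t)‖₊ : ℝ≥0∞) ∂volume)
          ≤ ∫⁻ t in Ioi c, (Iio (saa q n ω)).indicator (fun _ => (1:ℝ≥0∞)) t ∂volume := by
        refine setLIntegral_mono (measurable_const.indicator measurableSet_Iio) fun t ht => ?_
        by_cases h : t < saa q n ω
        · rw [indicator_of_mem (mem_Iio.mpr h)]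
          have hnorm : ‖f2 (ω, t)‖ ≤ 1 := by
            rw [hf2def, Real.norm_eq_abs, abs_mul]
            refine mul_le_one₀ (hb2 t) (abs_nonneg _) ?_
            split_ifs <;> simp
          have : (‖f2 (ω, t)‖₊ : ℝ≥0∞) ≤ (1 : ℝ≥0∞) := by
            rw [← ENNReal.coe_one, ENNReal.coe_le_coe]
            exact NNReal.coe_le_coe.mp (by simpa using hnorm)
          exact this
        · have h7 : q ≤ empCdf n ω t :=
            (saa_le_iff hq1.le hn ω (hc0.trans (le_of_lt ht))).mp (not_lt.mp h)
          have hzero : f2 (ω, t) = 0 := by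
            rw [hf2def]
            simp [not_lt.mpr h7]
          rw [hzero]
          simp
      refine h1.trans ?_
      rw [lintegral_indicator measurableSet_Iio, setLIntegral_one,
        Measure.restrict_apply measurableSet_Iio, inter_comm, Set.Ioi_inter_Iio,
        Real.volume_Ioo]
      refine ENNReal.ofReal_le_ofReal ?_
      have := saa_le_sumBound hq1.le hn ω
      linarith
    have hSmeas : ∀ i : Fin n, Measurable fun ω : Fin n → ℝ => ENNReal.ofReal (max (ω i) 0) :=
      fun i => ((measurable_pi_apply i).max measurable_const).ennreal_ofReal
    have hSint : Integrable (fun x : ℝ => max x 0) μ := by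
      exact hmean.sup (integrable_const 0)
    calc (∫⁻ ω, ∫⁻ t in Ioi c, (‖f2 (ω, t)‖₊ : ℝ≥0∞) ∂volume ∂P)
        ≤ ∫⁻ ω, ENNReal.ofReal (∑ i, max (ω i) 0) ∂P := lintegral_mono hbound
      _ = ∫⁻ ω, ∑ i, ENNReal.ofReal (max (ω i) 0) ∂P := by
          refine lintegral_congr fun ω => ?_
          rw [ENNReal.ofReal_sum_of_nonneg fun i _ => le_max_right _ _]
      _ = ∑ i, ∫⁻ ω, ENNReal.ofReal (max (ω i) 0) ∂P :=
          lintegral_finset_sum _ fun i _ => hSmeas i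
      _ = ∑ _i : Fin n, ∫⁻ x, ENNReal.ofReal (max x 0) ∂μ := by
          refine Finset.sum_congr rfl fun i _ => ?_
          rw [hPdef]
          exact (eval_measurePreserving i).lintegral_comp
            ((measurable_id.max measurable_const).ennreal_ofReal)
      _ < ⊤ := by
          refine ENNReal.sum_lt_top.mpr fun i _ => ?_
          exact hSint.lintegral_lt_top
  -- swap the order of integration
  have hswap1 := MeasureTheory.integral_integral_swap (f := fun ω t => f1 (ω, t)) hIf1
  have hswap2 := MeasureTheory.integral_integral_swap (f := fun ω t => f2 (ω, t)) hIf2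
  -- the inner ω-integrals
  have hip1 : ∀ t : ℝ, (∫ ω, f1 (ω, t) ∂P)
      = (q - cdf' μ t) * (P {ω | q ≤ empCdf n ω t}).toReal := by
    intro t
    have hrw : (fun ω : Fin n → ℝ => f1 (ω, t))
        = fun ω => (q - cdf' μ t) *
            ({ω : Fin n → ℝ | q ≤ empCdf n ω t}.indicator (fun _ => (1:ℝ)) ω) := by
      funext ω
      rw [hf1def]
      simp [Set.indicator_apply]
    rw [hrw, integral_const_mul, integral_indicator_const (1:ℝ) (hms1 t)]
    simp [Measure.real]
  have hip2 : ∀ t : ℝ, (∫ ω, f2 (ω, t) ∂P)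
      = (cdf' μ t - q) * (P {ω | empCdf n ω t < q}).toReal := by
    intro t
    have hrw : (fun ω : Fin n → ℝ => f2 (ω, t))
        = fun ω => (cdf' μ t - q) *
            ({ω : Fin n → ℝ | empCdf n ω t < q}.indicator (fun _ => (1:ℝ)) ω) := by
      funext ω
      rw [hf2def]
      simp [Set.indicator_apply]
    rw [hrw, integral_const_mul, integral_indicator_const (1:ℝ) (hms2 t)]
    simp [Measure.real]
  -- the pointwise regret identity
  have hkey : ∀ ω : Fin n → ℝ, expLoss q μ (saa q n ω)
      = ((∫ t in Ioc (0:ℝ) c, f1 (ω, t)) + ∫ t in Ioi c, f2 (ω, t)) + expLoss q μ c := by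
    intro ω
    have h := key_pointwise hq1 hq0.le hmean hn ω
    rw [hf1def, hf2def]
    dsimp only
    rw [← hcdef] at h
    linarith [h]
  have hg1 : Integrable (fun ω => ∫ t in Ioc (0:ℝ) c, f1 (ω, t)) P :=
    hIf1.integral_prod_left
  have hg2 : Integrable (fun ω => ∫ t in Ioi c, f2 (ω, t)) P :=
    hIf2.integral_prod_left
  have hL : (∫ ω, expLoss q μ (saa q n ω) ∂P) - expLoss q μ c
      = (∫ ω, (∫ t in Ioc (0:ℝ) c, f1 (ω, t)) ∂P)
        + ∫ ω, (∫ t in Ioi c, f2 (ω, t)) ∂P := by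
    rw [show (fun ω => expLoss q μ (saa q n ω))
        = fun ω => ((∫ t in Ioc (0:ℝ) c, f1 (ω, t)) + ∫ t in Ioi c, f2 (ω, t))
            + expLoss q μ c from funext hkey]
    have hsum : Integrable
        (fun ω => (∫ t in Ioc (0:ℝ) c, f1 (ω, t)) + ∫ t in Ioi c, f2 (ω, t)) P :=
      hg1.add hg2
    rw [integral_add hsum (integrable_const _), integral_add hg1 hg2, integral_const]
    simp
  rw [intervalIntegral.integral_of_le hc0]
  rw [hL, hswap1, hswap2]
  congr 1
  · exact integral_congr_ae (Filter.Eventually.of_forall fun t => hip1 t)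
  · exact integral_congr_ae (Filter.Eventually.of_forall fun t => hip2 t)
end
end

section
/- Fix q ∈ (0,1), β ∈ [0,∞), γ ∈ (0,∞), and ζ ∈ (0, (min{q,1−q})^{1/(β+1)}/γ]. Let F be the CDF of a (β,γ,ζ)-clustered probability distribution on [0,∞) with finite mean, and let â be the SAA decision based on n IID samples from F. For any δ ∈ (0,1), if n > log(2/δ) / (2(γζ)^{2β+2}), then with probability at least 1−δ, the additive regret satisfies L(â) − L(a*) ≤ (1/γ)·(log(2/δ)/(2n))^{(β+2)/(2β+2)}. -/
open MeasureTheory Set Filter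

set_option maxHeartbeats 1000000

noncomputable section

/-- Hoeffding's lemma for a Bernoulli-type mgf. -/
lemma bern_aux (p t : ℝ) (hp0 : 0 ≤ p) (hp1 : p ≤ 1) (ht : 0 ≤ t) :
    1 - p + p * Real.exp t ≤ Real.exp (t * p + t ^ 2 / 8) := by
  have hD : ∀ u : ℝ, 0 < 1 - p + p * Real.exp u := by
    intro u
    rcases eq_or_lt_of_le hp0 with h | h
    · simp [← h]
    · nlinarith [Real.exp_pos u]
  set φ : ℝ → ℝ := fun u => u * p + u ^ 2 / 8 - Real.log (1 - p + p * Real.exp u) with hφdef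
  set ψ : ℝ → ℝ := fun u => p + u / 4 - p * Real.exp u / (1 - p + p * Real.exp u) with hψdef
  have hDer : ∀ u : ℝ, HasDerivAt (fun x => 1 - p + p * Real.exp x) (p * Real.exp u) u :=
    fun u => ((Real.hasDerivAt_exp u).const_mul p).const_add (1 - p)
  have hφ' : ∀ u, HasDerivAt φ (ψ u) u := by
    intro u
    have h1 : HasDerivAt (fun x : ℝ => x * p + x ^ 2 / 8) (p + u / 4) u := by
      have := ((hasDerivAt_id u).mul_const p).add ((hasDerivAt_pow 2 u).div_const 8)
      refine this.congr_deriv ?_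
      push_cast
      ring
    have h2 : HasDerivAt (fun x => Real.log (1 - p + p * Real.exp x))
        (p * Real.exp u / (1 - p + p * Real.exp u)) u := (hDer u).log (ne_of_gt (hD u))
    exact h1.sub h2
  have hψ' : ∀ u, HasDerivAt ψ
      (1 / 4 - p * Real.exp u * (1 - p) / (1 - p + p * Real.exp u) ^ 2) u := by
    intro u
    have hnum : HasDerivAt (fun x => p * Real.exp x) (p * Real.exp u) u :=
      (Real.hasDerivAt_exp u).const_mul p
    have hdiv := hnum.div (hDer u) (ne_of_gt (hD u))
    have h3 : HasDerivAt (fun x : ℝ => p + x / 4) (1 / 4) u := by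
      have := (hasDerivAt_id u).div_const 4
      exact (by simpa using this : HasDerivAt (fun x : ℝ => x / 4) (1/4) u).const_add p
    have h4 := h3.sub hdiv
    refine h4.congr_deriv ?_
    have hDu := hD u
    field_simp
    ring
  have hψmono : Monotone ψ := by
    apply monotone_of_deriv_nonneg (fun u => (hψ' u).differentiableAt)
    intro u
    rw [(hψ' u).deriv]
    have hDu := hD u
    have he := Real.exp_pos u
    rw [sub_nonneg, div_le_iff₀ (by positivity)]
    nlinarith [sq_nonneg (p * Real.exp u - (1 - p))]
  have hψ0 : ψ 0 = 0 := by simp [hψdef]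
  have hφmono : MonotoneOn φ (Ici (0:ℝ)) := by
    apply monotoneOn_of_deriv_nonneg (convex_Ici 0)
    · exact Continuous.continuousOn (by
        have : Differentiable ℝ φ := fun u => (hφ' u).differentiableAt
        exact this.continuous)
    · intro x _
      exact (hφ' x).differentiableAt.differentiableWithinAt
    · intro x hx
      rw [interior_Ici] at hx
      rw [(hφ' x).deriv]
      have := hψmono (le_of_lt hx : (0:ℝ) ≤ x)
      rw [hψ0] at this
      exact this
  have hφ0 : φ 0 = 0 := by simp [hφdef]
  have hmt := hφmono (self_mem_Ici) (by exact ht : t ∈ Ici (0:ℝ)) ht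
  rw [hφ0] at hmt
  have hlog : Real.log (1 - p + p * Real.exp t) ≤ t * p + t ^ 2 / 8 := by
    simp only [hφdef] at hmt; linarith
  calc 1 - p + p * Real.exp t = Real.exp (Real.log (1 - p + p * Real.exp t)) :=
        (Real.exp_log (hD t)).symm
    _ ≤ Real.exp (t * p + t ^ 2 / 8) := Real.exp_le_exp.2 hlog

/-- Chernoff/Hoeffding upper-tail bound for iid sums of `[0,1]`-valued functions. -/
lemma chernoff (μ : Measure ℝ) [IsProbabilityMeasure μ] (f : ℝ → ℝ) (hf : Measurable f)
    (h01 : ∀ x, f x ∈ Icc (0:ℝ) 1) (n : ℕ) (m ε : ℝ) (hm : ∫ x, f x ∂μ ≤ m) (hε : 0 ≤ ε) :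
    (Measure.pi fun _ : Fin n => μ) {ω | (n:ℝ) * (m + ε) ≤ ∑ i, f (ω i)} ≤
      ENNReal.ofReal (Real.exp (-(2 * n * ε ^ 2))) := by
  set t : ℝ := 4 * ε with htdef
  have ht : 0 ≤ t := by positivity
  have hfint : Integrable f μ :=
    (integrable_const (1:ℝ)).mono' hf.aestronglyMeasurable
      (ae_of_all _ fun x => by
        rw [Real.norm_eq_abs, abs_of_nonneg (h01 x).1]; exact (h01 x).2)
  set mb : ℝ := ∫ x, f x ∂μ with hmb
  have hmb0 : 0 ≤ mb := integral_nonneg fun x => (h01 x).1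
  have hmb1 : mb ≤ 1 := by
    calc mb ≤ ∫ _x, (1:ℝ) ∂μ := integral_mono hfint (integrable_const 1) fun x => (h01 x).2
      _ = 1 := by simp
  have hexpmeas : Measurable fun x => Real.exp (t * f x) :=
    (Real.measurable_exp.comp (hf.const_mul t))
  have hexpint : Integrable (fun x => Real.exp (t * f x)) μ := by
    refine (integrable_const (Real.exp t)).mono' hexpmeas.aestronglyMeasurable
      (ae_of_all _ fun x => ?_)
    rw [Real.norm_eq_abs, abs_of_nonneg (Real.exp_pos _).le, Real.exp_le_exp]
    calc t * f x ≤ t * 1 := mul_le_mul_of_nonneg_left (h01 x).2 ht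
      _ = t := mul_one t
  have hkey : ∫ x, Real.exp (t * f x) ∂μ ≤ Real.exp (t * m + t ^ 2 / 8) := by
    have h1 : ∀ x, Real.exp (t * f x) ≤ 1 - f x + f x * Real.exp t := by
      intro x
      have := convexOn_exp.2 (mem_univ (0:ℝ)) (mem_univ t)
        (by linarith [(h01 x).1, (h01 x).2] : (0:ℝ) ≤ 1 - f x) (h01 x).1 (by ring)
      simpa [mul_comm] using this
    have hint1 : Integrable (fun x => 1 - f x) μ := (integrable_const 1).sub hfint
    have hint2 : Integrable (fun x => f x * Real.exp t) μ := hfint.mul_const _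
    have h2 : ∫ x, Real.exp (t * f x) ∂μ ≤ ∫ x, (1 - f x + f x * Real.exp t) ∂μ :=
      integral_mono hexpint (hint1.add hint2) h1
    have h3 : ∫ x, (1 - f x + f x * Real.exp t) ∂μ = 1 - mb + mb * Real.exp t := by
      rw [integral_add hint1 hint2, integral_sub (integrable_const 1) hfint,
        integral_mul_const]
      simp [hmb]
    have h4 : 1 - mb + mb * Real.exp t ≤ Real.exp (t * mb + t ^ 2 / 8) :=
      bern_aux mb t hmb0 hmb1 ht
    have h5 : Real.exp (t * mb + t ^ 2 / 8) ≤ Real.exp (t * m + t ^ 2 / 8) := by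
      rw [Real.exp_le_exp]
      have : t * mb ≤ t * m := mul_le_mul_of_nonneg_left hm ht
      linarith
    linarith
  -- the product structure
  set G : (Fin n → ℝ) → ℝ := fun ω => Real.exp (t * ∑ i, f (ω i)) with hGdef
  have hGprod : ∀ ω, G ω = ∏ i : Fin n, Real.exp (t * f (ω i)) := by
    intro ω
    rw [hGdef]
    simp only [Finset.mul_sum]
    exact Real.exp_sum _ _
  have hGint : ∫ ω, G ω ∂(Measure.pi fun _ : Fin n => μ) =
      (∫ x, Real.exp (t * f x) ∂μ) ^ n := by
    have := MeasureTheory.integral_fintype_prod_eq_pow (ι := Fin n)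
      (fun x => Real.exp (t * f x)) (μ := μ)
    simp only [Fintype.card_fin] at this
    calc ∫ ω, G ω ∂(Measure.pi fun _ : Fin n => μ)
        = ∫ ω : Fin n → ℝ, ∏ i, Real.exp (t * f (ω i)) ∂(Measure.pi fun _ : Fin n => μ) := by
          congr 1; exact funext hGprod
      _ = (∫ x, Real.exp (t * f x) ∂μ) ^ n := this
  have hGmeas : Measurable G := by
    apply Real.measurable_exp.comp
    apply Measurable.const_mul
    exact Finset.measurable_sum _ fun i _ => hf.comp (measurable_pi_apply i)
  haveI : IsProbabilityMeasure (Measure.pi fun _ : Fin n => μ) := by infer_instance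
  have hGintg : Integrable G (Measure.pi fun _ : Fin n => μ) := by
    refine (integrable_const (Real.exp (t * n))).mono' hGmeas.aestronglyMeasurable
      (ae_of_all _ fun ω => ?_)
    rw [Real.norm_eq_abs, abs_of_nonneg (Real.exp_pos _).le, Real.exp_le_exp]
    have h6 : ∑ i, f (ω i) ≤ ∑ _i : Fin n, (1:ℝ) :=
      Finset.sum_le_sum fun i _ => (h01 (ω i)).2
    simp only [Finset.sum_const, Finset.card_univ, Fintype.card_fin, nsmul_eq_mul, mul_one] at h6
    exact mul_le_mul_of_nonneg_left h6 ht
  set c : ℝ := Real.exp (t * ((n:ℝ) * (m + ε))) with hcdef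
  have hc0 : 0 < c := Real.exp_pos _
  have hsub : {ω : Fin n → ℝ | (n:ℝ) * (m + ε) ≤ ∑ i, f (ω i)} ⊆ {ω | c ≤ G ω} := by
    intro ω hω
    rw [mem_setOf_eq, hcdef, hGdef, Real.exp_le_exp]
    exact mul_le_mul_of_nonneg_left hω ht
  have hmar := mul_meas_ge_le_integral_of_nonneg
    (ae_of_all _ fun ω => (Real.exp_pos _).le : 0 ≤ᵐ[Measure.pi fun _ : Fin n => μ] G) hGintg c
  have hItop : (Measure.pi fun _ : Fin n => μ) {ω | c ≤ G ω} ≠ ⊤ := measure_ne_top _ _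
  have hI : ∫ ω, G ω ∂(Measure.pi fun _ : Fin n => μ) ≤ Real.exp (t * m + t ^ 2 / 8) ^ n := by
    rw [hGint]
    exact pow_le_pow_left₀ (integral_nonneg fun x => (Real.exp_pos _).le) hkey n
  have heq : Real.exp (t * m + t ^ 2 / 8) ^ n = c * Real.exp (-(2 * n * ε ^ 2)) := by
    rw [← Real.exp_nat_mul, hcdef, ← Real.exp_add]
    congr 1
    rw [htdef]
    ring
  have hval : ((Measure.pi fun _ : Fin n => μ) {ω | c ≤ G ω}).toReal ≤
      Real.exp (-(2 * n * ε ^ 2)) := by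
    have h7 : c * ((Measure.pi fun _ : Fin n => μ) {ω | c ≤ G ω}).toReal ≤
        c * Real.exp (-(2 * n * ε ^ 2)) := le_trans hmar (by rw [← heq]; exact hI)
    exact le_of_mul_le_mul_left h7 hc0
  calc (Measure.pi fun _ : Fin n => μ) {ω | (n:ℝ) * (m + ε) ≤ ∑ i, f (ω i)}
      ≤ (Measure.pi fun _ : Fin n => μ) {ω | c ≤ G ω} := measure_mono hsub
    _ = ENNReal.ofReal (((Measure.pi fun _ : Fin n => μ) {ω | c ≤ G ω}).toReal) :=
        (ENNReal.ofReal_toReal hItop).symm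
    _ ≤ ENNReal.ofReal (Real.exp (-(2 * n * ε ^ 2))) := ENNReal.ofReal_le_ofReal hval

lemma cdf'_mono (μ : Measure ℝ) [IsProbabilityMeasure μ] : Monotone (cdf' μ) :=
  fun a b hab => ENNReal.toReal_mono (measure_ne_top μ _) (measure_mono (Iic_subset_Iic.2 hab))

lemma cdf'_nonneg (μ : Measure ℝ) (u : ℝ) : 0 ≤ cdf' μ u := ENNReal.toReal_nonneg

lemma cdf'_le_one (μ : Measure ℝ) [IsProbabilityMeasure μ] (u : ℝ) : cdf' μ u ≤ 1 := by
  have h := prob_le_one (μ := μ) (s := Iic u)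
  have := ENNReal.toReal_mono (by norm_num) h
  simpa [cdf'] using this

lemma cdf'_eq_cdf (μ : Measure ℝ) [IsProbabilityMeasure μ] :
    cdf' μ = fun x => ProbabilityTheory.cdf μ x := by
  funext x
  exact (ProbabilityTheory.cdf_eq_real μ x).symm

/-- Right-continuity consequence: bounds valid strictly to the right extend to the point. -/
lemma cdf'_right (μ : Measure ℝ) [IsProbabilityMeasure μ] (s c : ℝ)
    (h : ∀ v, s < v → c ≤ cdf' μ v) : c ≤ cdf' μ s := by
  rw [cdf'_eq_cdf] at h ⊢
  have h1 : Tendsto (ProbabilityTheory.cdf μ) (nhdsWithin s (Ioi s))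
      (nhds (ProbabilityTheory.cdf μ s)) :=
    ((ProbabilityTheory.cdf μ).right_continuous s).mono_left
      (nhdsWithin_mono s Ioi_subset_Ici_self)
  exact ge_of_tendsto h1 (eventually_nhdsWithin_of_forall fun v hv => h v hv)

lemma cdf'_tendsto (μ : Measure ℝ) [IsProbabilityMeasure μ] :
    Filter.Tendsto (cdf' μ) Filter.atTop (nhds 1) := by
  rw [cdf'_eq_cdf]
  exact ProbabilityTheory.tendsto_cdf_atTop μ

lemma meas_Iio_le (μ : Measure ℝ) [IsProbabilityMeasure μ] (s' c : ℝ) (hc : 0 ≤ c)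
    (h : ∀ u, u < s' → cdf' μ u ≤ c) : (μ (Iio s')).toReal ≤ c := by
  have hU : Iio s' = ⋃ k : ℕ, Iic (s' - 1/(k+1)) := by
    ext x
    simp only [mem_Iio, mem_iUnion, mem_Iic]
    constructor
    · intro hx
      obtain ⟨k, hk⟩ := exists_nat_one_div_lt (sub_pos.2 hx)
      exact ⟨k, by push_cast at hk ⊢; linarith⟩
    · rintro ⟨k, hk⟩
      have h2 : (0:ℝ) < 1/((k:ℝ)+1) := by positivity
      linarith
  have hmono : Monotone fun k : ℕ => Iic (s' - 1/((k:ℝ)+1)) := by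
    intro i j hij
    apply Iic_subset_Iic.2
    have : 1/((j:ℝ)+1) ≤ 1/((i:ℝ)+1) := by
      apply one_div_le_one_div_of_le (by positivity)
      exact_mod_cast by omega
    linarith
  have hlim := tendsto_measure_iUnion_atTop (μ := μ) hmono
  rw [← hU] at hlim
  have hle : ∀ k : ℕ, μ (Iic (s' - 1/((k:ℝ)+1))) ≤ ENNReal.ofReal c := by
    intro k
    have h1 : cdf' μ (s' - 1/((k:ℝ)+1)) ≤ c := h _ (by
      have : (0:ℝ) < 1/((k:ℝ)+1) := by positivity
      linarith)
    exact (ENNReal.le_ofReal_iff_toReal_le (measure_ne_top μ _) hc).2 h1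
  have := le_of_tendsto' hlim hle
  exact ENNReal.toReal_le_of_le_ofReal hc this

lemma nvLoss_integrable (q a : ℝ) (μ : Measure ℝ) (hmean : Integrable (fun z => z) μ)
    [IsProbabilityMeasure μ] : Integrable (fun z => nvLoss q a z) μ := by
  unfold nvLoss
  apply Integrable.add
  · exact ((hmean.sub (integrable_const a)).pos_part).const_mul q
  · exact (((integrable_const a).sub hmean).pos_part).const_mul (1 - q)

lemma nv_diff (q a b z : ℝ) (hab : a ≤ b) :
    nvLoss q b z - nvLoss q a z = max (b - max a z) 0 - q * (b - a) := by
  unfold nvLoss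
  rcases le_total z a with h1 | h1
  · rcases le_total z b with h2 | h2
    · rw [max_eq_right (by linarith : z - b ≤ 0), max_eq_left (by linarith : 0 ≤ b - z),
        max_eq_right (by linarith : z - a ≤ 0), max_eq_left (by linarith : 0 ≤ a - z),
        max_eq_left h1, max_eq_left (by linarith : 0 ≤ b - a)]
      ring
    · -- degenerate: z ≤ a ≤ b ≤ z
      have hzb : z = b := le_antisymm (h1.trans hab) h2
      have hza : z = a := le_antisymm h1 (by linarith)
      rw [← hza, ← hzb]
      simp
  · rcases le_total z b with h2 | h2
    · rw [max_eq_right (by linarith : z - b ≤ 0), max_eq_left (by linarith : 0 ≤ b - z),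
        max_eq_left (by linarith : 0 ≤ z - a), max_eq_right (by linarith : a - z ≤ 0),
        max_eq_right h1, max_eq_left (by linarith : 0 ≤ b - z)]
      ring
    · rw [max_eq_left (by linarith : 0 ≤ z - b), max_eq_right (by linarith : b - z ≤ 0),
        max_eq_left (by linarith : 0 ≤ z - a), max_eq_right (by linarith : a - z ≤ 0),
        max_eq_right h1, max_eq_right (by linarith : b - z ≤ 0)]
      ring

lemma cdf'_integrableOn (μ : Measure ℝ) [IsProbabilityMeasure μ] (q : ℝ) (a b : ℝ) :
    IntegrableOn (fun u => cdf' μ u - q) (Ioc a b) := by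
  have hFm : Measurable (cdf' μ) := (cdf'_mono μ).measurable
  refine Integrable.mono' (g := fun _ => 1 + |q|)
    (integrableOn_const measure_Ioc_lt_top.ne)
    ((hFm.sub measurable_const).aestronglyMeasurable) (ae_of_all _ fun u => ?_)
  rw [Real.norm_eq_abs]
  show |cdf' μ u - q| ≤ 1 + |q|
  have h1 := cdf'_nonneg μ u
  have h2 := cdf'_le_one μ u
  rw [abs_le]
  constructor <;> linarith [neg_abs_le q, le_abs_self q]

lemma expLoss_diff (q : ℝ) (μ : Measure ℝ) [IsProbabilityMeasure μ]
    (hmean : Integrable (fun z => z) μ) (a b : ℝ) (hab : a ≤ b) :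
    expLoss q μ b - expLoss q μ a = ∫ u in Ioc a b, (cdf' μ u - q) := by
  have hb := nvLoss_integrable q b μ hmean
  have ha := nvLoss_integrable q a μ hmean
  -- pointwise integral computation of the kernel
  have hz : ∀ z : ℝ, ∫ u in Ioc a b, (if z ≤ u then (1:ℝ) else 0) = max (b - max a z) 0 := by
    intro z
    have hind : (fun u => if z ≤ u then (1:ℝ) else 0) = (Ici z).indicator (fun _ => (1:ℝ)) := by
      funext u
      simp [Set.indicator_apply, mem_Ici]
    rw [hind, setIntegral_indicator measurableSet_Ici, setIntegral_const]
    rcases le_or_gt z a with hza | hza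
    · have hsub2 : Ioc a b ⊆ Ici z := fun x hx => le_trans hza (le_of_lt hx.1)
      rw [inter_eq_self_of_subset_left hsub2]
      rw [Real.volume_real_Ioc, smul_eq_mul, mul_one, max_eq_left hza]
    · have hset : Ioc a b ∩ Ici z = Icc z b := by
        ext x
        simp only [mem_inter_iff, mem_Ioc, mem_Ici, mem_Icc]
        constructor
        · rintro ⟨⟨_, hxb⟩, hzx⟩; exact ⟨hzx, hxb⟩
        · rintro ⟨hzx, hxb⟩; exact ⟨⟨lt_of_lt_of_le hza hzx, hxb⟩, hzx⟩
      rw [hset, Real.volume_real_Icc, smul_eq_mul, mul_one,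
        max_eq_right hza.le]
  -- Fubini swap
  have hswap : ∫ z, (∫ u in Ioc a b, (if z ≤ u then (1:ℝ) else 0)) ∂μ
      = ∫ u in Ioc a b, (∫ z, (if z ≤ u then (1:ℝ) else 0) ∂μ) := by
    apply integral_integral_swap
    have hmeas : Measurable (fun p : ℝ × ℝ => if p.1 ≤ p.2 then (1:ℝ) else 0) :=
      Measurable.ite (measurableSet_le measurable_fst measurable_snd)
        measurable_const measurable_const
    haveI : Fact ((volume : Measure ℝ) (Ioc a b) < ⊤) := ⟨measure_Ioc_lt_top⟩
    refine (integrable_const (1:ℝ)).mono' hmeas.aestronglyMeasurable (ae_of_all _ fun p => ?_)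
    obtain ⟨x, y⟩ := p
    simp only [Function.uncurry_apply_pair, Real.norm_eq_abs]
    split_ifs <;> simp
  have hinner : ∀ u : ℝ, ∫ z, (if z ≤ u then (1:ℝ) else 0) ∂μ = cdf' μ u := by
    intro u
    have hind : (fun z => if z ≤ u then (1:ℝ) else 0) = (Iic u).indicator (fun _ => (1:ℝ)) := by
      funext z
      simp [Set.indicator_apply, mem_Iic]
    rw [hind, integral_indicator_const (1:ℝ) measurableSet_Iic, smul_eq_mul, mul_one]
    rfl
  have hmaxint : Integrable (fun z => max (b - max a z) 0) μ := by
    have hmeas : Measurable fun z : ℝ => max (b - max a z) 0 :=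
      ((measurable_const.sub (measurable_const.max measurable_id)).max measurable_const)
    refine (integrable_const (b - a)).mono' hmeas.aestronglyMeasurable (ae_of_all _ fun z => ?_)
    rw [Real.norm_eq_abs, abs_of_nonneg (le_max_right _ _)]
    apply max_le _ (by linarith)
    have := le_max_left a z
    linarith
  have e1 : expLoss q μ b - expLoss q μ a = ∫ z, (nvLoss q b z - nvLoss q a z) ∂μ :=
    (integral_sub hb ha).symm
  have e2 : ∫ z, (nvLoss q b z - nvLoss q a z) ∂μ
      = ∫ z, (max (b - max a z) 0 - q * (b - a)) ∂μ := by
    congr 1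
    funext z
    exact nv_diff q a b z hab
  have e3 : ∫ z, (max (b - max a z) 0 - q * (b - a)) ∂μ
      = (∫ z, max (b - max a z) 0 ∂μ) - q * (b - a) := by
    rw [integral_sub hmaxint (integrable_const _)]
    simp
  have e4 : ∫ z, max (b - max a z) 0 ∂μ = ∫ u in Ioc a b, cdf' μ u := by
    calc ∫ z, max (b - max a z) 0 ∂μ
        = ∫ z, (∫ u in Ioc a b, (if z ≤ u then (1:ℝ) else 0)) ∂μ := by
          congr 1; funext z; exact (hz z).symm
      _ = ∫ u in Ioc a b, (∫ z, (if z ≤ u then (1:ℝ) else 0) ∂μ) := hswap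
      _ = ∫ u in Ioc a b, cdf' μ u := by
          congr 1; funext u; exact hinner u
  have e5 : ∫ u in Ioc a b, (cdf' μ u - q) = (∫ u in Ioc a b, cdf' μ u) - q * (b - a) := by
    have h1 : IntegrableOn (cdf' μ) (Ioc a b) := by
      have := cdf'_integrableOn μ 0 a b
      simpa using this
    rw [integral_sub h1 (integrableOn_const measure_Ioc_lt_top.ne)]
    rw [setIntegral_const, Real.volume_real_Ioc_of_le hab, smul_eq_mul]
    ring
  rw [e1, e2, e3, e4, e5]

/-- bounding a set integral over `Ioc` by a bound valid on the open interval. -/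
lemma int_Ioc_le (c d M : ℝ) (hcd : c ≤ d) (hM : 0 ≤ M) (g : ℝ → ℝ)
    (hg : IntegrableOn g (Ioc c d)) (hb : ∀ u ∈ Ioo c d, g u ≤ M) :
    ∫ u in Ioc c d, g u ≤ M * (d - c) := by
  rw [setIntegral_congr_set (Ioo_ae_eq_Ioc (μ := volume) (a := c) (b := d)).symm]
  calc ∫ u in Ioo c d, g u ≤ ∫ _u in Ioo c d, M := by
        apply setIntegral_mono_on (hg.mono_set Ioo_subset_Ioc_self)
          (integrableOn_const measure_Ioo_lt_top.ne) measurableSet_Ioo hb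
    _ = M * (d - c) := by
        rw [setIntegral_const, Real.volume_real_Ioo_of_le hcd, smul_eq_mul]
        ring

/-- High-probability additive regret upper bound for SAA on
`(β,γ,ζ)`-clustered distributions: if `n > log(2/δ)/(2(γζ)^{2β+2})`, then with probability
at least `1−δ`, `L(â) − L(a*) ≤ (1/γ)·(log(2/δ)/(2n))^{(β+2)/(2β+2)}`. -/
theorem saa_high_prob_additive_regret_clustered
    (q β γ ζ : ℝ) (hq : q ∈ Ioo (0:ℝ) 1) (hβ : 0 ≤ β) (hγ : 0 < γ)
    (hζ : ζ ∈ Ioc 0 ((min q (1 - q)) ^ ((1:ℝ)/(β+1)) / γ))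
    (μ : Measure ℝ) [IsProbabilityMeasure μ] (hsupp : μ (Iio 0) = 0)
    (hmean : Integrable (fun z => z) μ)
    (hclus : Clustered q β γ ζ μ)
    (n : ℕ) (δ : ℝ) (hδ : δ ∈ Ioo (0:ℝ) 1)
    (hn : Real.log (2/δ) / (2 * (γ*ζ) ^ (2*β+2)) < n) :
    ENNReal.ofReal (1 - δ) ≤
      (iid μ n) {ω | expLoss q μ (saa q n ω) - expLoss q μ (optDec q μ)
        ≤ (1/γ) * (Real.log (2/δ) / (2*n)) ^ ((β+2)/(2*β+2))} := by
  obtain ⟨hq0, hq1⟩ := hq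
  obtain ⟨hζ0, hζle⟩ := hζ
  obtain ⟨hδ0, hδ1⟩ := hδ
  have hβ1 : 0 < β + 1 := by linarith
  have hmin : 0 < min q (1 - q) := lt_min hq0 (by linarith)
  have hlog : 0 < Real.log (2/δ) := Real.log_pos (by rw [lt_div_iff₀ hδ0]; linarith)
  have hγζ : 0 < γ * ζ := mul_pos hγ hζ0
  have hpow : 0 < (γ*ζ) ^ (2*β+2) := Real.rpow_pos_of_pos hγζ _
  have hn0 : 0 < n := by
    rcases Nat.eq_zero_or_pos n with h | h
    · exfalso
      rw [h] at hn
      push_cast at hn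
      have := div_pos hlog (by positivity : (0:ℝ) < 2 * (γ*ζ) ^ (2*β+2))
      linarith
    · exact h
  have hn0R : (0:ℝ) < n := by exact_mod_cast hn0
  set t : ℝ := Real.log (2/δ) / (2*n) with htdef
  have ht0 : 0 < t := div_pos hlog (by positivity)
  set ε : ℝ := t ^ ((1:ℝ)/2) with hεdef
  have hε0 : 0 < ε := Real.rpow_pos_of_pos ht0 _
  have hε2 : ε ^ 2 = t := by
    rw [hεdef, ← Real.rpow_natCast (t ^ ((1:ℝ)/2)) 2, ← Real.rpow_mul ht0.le]
    norm_num
  have hεlt : ε < (γ*ζ) ^ (β+1) := by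
    have h1 : t < (γ*ζ) ^ (2*β+2) := by
      rw [htdef, div_lt_iff₀ (by positivity)]
      have h2 := (div_lt_iff₀ (by positivity : (0:ℝ) < 2 * (γ*ζ) ^ (2*β+2))).1 hn
      calc Real.log (2/δ) < (n:ℝ) * (2 * (γ*ζ) ^ (2*β+2)) := h2
        _ = (γ*ζ) ^ (2*β+2) * (2*(n:ℝ)) := by ring
    have h2 : (γ*ζ) ^ (2*β+2) = ((γ*ζ) ^ (β+1)) ^ 2 := by
      rw [← Real.rpow_natCast ((γ*ζ) ^ (β+1)) 2, ← Real.rpow_mul hγζ.le]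
      norm_num
      ring_nf
    have hX0 : 0 < (γ*ζ) ^ (β+1) := Real.rpow_pos_of_pos hγζ _
    nlinarith [hε2, hε0]
  have hζpow : (γ*ζ) ^ (β+1) ≤ min q (1-q) := by
    have h1 : γ * ζ ≤ (min q (1-q)) ^ ((1:ℝ)/(β+1)) := by
      rw [le_div_iff₀ hγ] at hζle
      linarith [hζle]
    calc (γ*ζ) ^ (β+1) ≤ ((min q (1-q)) ^ ((1:ℝ)/(β+1))) ^ (β+1) :=
          Real.rpow_le_rpow hγζ.le h1 (by linarith)
      _ = min q (1-q) := by
          rw [← Real.rpow_mul hmin.le, one_div_mul_cancel hβ1.ne', Real.rpow_one]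
  have hεq : ε < q := lt_of_lt_of_le hεlt (hζpow.trans (min_le_left _ _))
  have hεq' : ε < 1 - q := lt_of_lt_of_le hεlt (hζpow.trans (min_le_right _ _))
  set r : ℝ := (1/γ) * ε ^ ((1:ℝ)/(β+1)) with hrdef
  have hεr0 : 0 < ε ^ ((1:ℝ)/(β+1)) := Real.rpow_pos_of_pos hε0 _
  have hr0 : 0 < r := by
    rw [hrdef]; positivity
  have hrpow : (γ*r) ^ (β+1) = ε := by
    have hγr : γ * r = ε ^ ((1:ℝ)/(β+1)) := by
      rw [hrdef]; field_simp
    rw [hγr, ← Real.rpow_mul hε0.le, one_div_mul_cancel hβ1.ne', Real.rpow_one]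
  have hrζ : r < ζ := by
    by_contra hcon
    push_neg at hcon
    have h1 : (γ*ζ) ^ (β+1) ≤ (γ*r) ^ (β+1) :=
      Real.rpow_le_rpow hγζ.le (mul_le_mul_of_nonneg_left hcon hγ.le) (by linarith)
    rw [hrpow] at h1
    linarith
  -- basic cdf facts
  have hFmono := cdf'_mono μ
  have hF0 : ∀ u : ℝ, u < 0 → cdf' μ u = 0 := by
    intro u hu
    have h1 : μ (Iic u) = 0 :=
      le_antisymm (le_trans (measure_mono (fun x hx => lt_of_le_of_lt hx hu)) hsupp.le)
        (zero_le)
    rw [cdf', h1, ENNReal.toReal_zero]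
  have hSne : {a : ℝ | 0 ≤ a ∧ q ≤ cdf' μ a}.Nonempty := by
    have h1 : ∀ᶠ a in atTop, q ≤ cdf' μ a :=
      (cdf'_tendsto μ).eventually (eventually_ge_nhds hq1)
    have h2 : ∀ᶠ a : ℝ in atTop, 0 ≤ a := eventually_ge_atTop 0
    obtain ⟨a, ha1, ha2⟩ := (h2.and h1).exists
    exact ⟨a, ha1, ha2⟩
  have hSbdd : BddBelow {a : ℝ | 0 ≤ a ∧ q ≤ cdf' μ a} := ⟨0, fun a ha => ha.1⟩
  set astar : ℝ := optDec q μ with hastar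
  have ha0 : 0 ≤ astar := le_csInf hSne fun a ha => ha.1
  have hFlt : ∀ u, u < astar → cdf' μ u < q := by
    intro u hu
    rcases lt_or_ge u 0 with h | h
    · rw [hF0 u h]; exact hq0
    · by_contra hcon
      push_neg at hcon
      have : astar ≤ u := csInf_le hSbdd ⟨h, hcon⟩
      linarith
  have hFgt : ∀ v, astar < v → q ≤ cdf' μ v := by
    intro v hv
    obtain ⟨a, ha, hav⟩ := exists_lt_of_csInf_lt hSne hv
    exact le_trans ha.2 (hFmono hav.le)
  -- clustered lower bound on |F - q|
  have hclb : ∀ u : ℝ, |u - astar| ≤ ζ → (γ * |u - astar|) ^ (β+1) ≤ |cdf' μ u - q| := by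
    intro u hu
    obtain ⟨hu1, hu2⟩ := abs_le.1 hu
    have h1 := hclus u ⟨by linarith, by linarith⟩
    have h2 : γ * |u - astar| ≤ |cdf' μ u - q| ^ ((1:ℝ)/(β+1)) := by
      have := mul_le_mul_of_nonneg_left h1 hγ.le
      calc γ * |u - astar| ≤ γ * ((1/γ) * |cdf' μ u - q| ^ ((1:ℝ)/(β+1))) := this
        _ = |cdf' μ u - q| ^ ((1:ℝ)/(β+1)) := by field_simp
    calc (γ * |u - astar|) ^ (β+1) ≤ (|cdf' μ u - q| ^ ((1:ℝ)/(β+1))) ^ (β+1) :=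
          Real.rpow_le_rpow (by positivity) h2 (by linarith)
      _ = |cdf' μ u - q| := by
          rw [← Real.rpow_mul (abs_nonneg _), one_div_mul_cancel hβ1.ne', Real.rpow_one]
  -- the upper quantile point s
  set Su : Set ℝ := {u : ℝ | q + ε < cdf' μ u} with hSudef
  have hSune : Su.Nonempty := by
    have h1 : ∀ᶠ u in atTop, q + ε < cdf' μ u :=
      (cdf'_tendsto μ).eventually (eventually_gt_nhds (by linarith))
    exact h1.exists
  have hSubdd : BddBelow Su := by
    refine ⟨astar, fun u hu => ?_⟩
    by_contra hcon
    push_neg at hcon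
    have := hFlt u hcon
    have hu' : q + ε < cdf' μ u := hu
    linarith
  set s : ℝ := sInf Su with hsdef
  have hsa : astar ≤ s := le_csInf hSune fun u hu => by
    by_contra hcon
    push_neg at hcon
    have := hFlt u hcon
    have hu' : q + ε < cdf' μ u := hu
    linarith
  have hs_le : s ≤ astar + r := by
    by_contra hcon
    push_neg at hcon
    set u : ℝ := min ((astar + r + s)/2) (astar + ζ) with hudef
    have hu1 : astar + r < u := lt_min (by linarith) (by linarith)
    have hu2 : u ≤ astar + ζ := min_le_right _ _
    have hus : u < s := lt_of_le_of_lt (min_le_left _ _) (by linarith)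
    have habs : |u - astar| ≤ ζ := abs_le.2 ⟨by linarith, by linarith⟩
    have hq' := hclb u habs
    have hFu : q ≤ cdf' μ u := hFgt u (by linarith)
    have h5 : ε < (γ * |u - astar|) ^ (β+1) := by
      rw [← hrpow]
      apply Real.rpow_lt_rpow (by positivity) _ (by linarith)
      rw [abs_of_nonneg (by linarith : 0 ≤ u - astar)]
      have := mul_lt_mul_of_pos_left (show r < u - astar by linarith) hγ
      linarith [this]
    have h6 : q + ε < cdf' μ u := by
      have h7 := lt_of_lt_of_le h5 hq'
      rw [abs_of_nonneg (by linarith : 0 ≤ cdf' μ u - q)] at h7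
      linarith
    have : s ≤ u := csInf_le hSubdd h6
    linarith
  have hFs : q + ε ≤ cdf' μ s := by
    apply cdf'_right μ s (q + ε)
    intro v hv
    obtain ⟨u, hu, huv⟩ := exists_lt_of_csInf_lt hSune hv
    exact le_trans (le_of_lt hu) (hFmono huv.le)
  have hs_ub : ∀ u, u < s → cdf' μ u ≤ q + ε := by
    intro u hu
    by_contra hcon
    push_neg at hcon
    have : s ≤ u := csInf_le hSubdd hcon
    linarith
  have hs0 : 0 ≤ s := le_trans ha0 hsa
  -- the lower quantile point s'
  set Sl : Set ℝ := {u : ℝ | cdf' μ u < q - ε} with hSldef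
  have hSlne : Sl.Nonempty := ⟨-1, by
    show cdf' μ (-1) < q - ε
    rw [hF0 (-1) (by norm_num)]
    linarith⟩
  have hSlbdd : BddAbove Sl := by
    refine ⟨astar, fun u hu => ?_⟩
    by_contra hcon
    push_neg at hcon
    have h1 := hFgt u hcon
    have hu' : cdf' μ u < q - ε := hu
    linarith
  set s' : ℝ := sSup Sl with hs'def
  have hs'a : s' ≤ astar := csSup_le hSlne fun u hu => by
    by_contra hcon
    push_neg at hcon
    have h1 := hFgt u hcon
    have hu' : cdf' μ u < q - ε := hu
    linarith
  have hs'_ge : astar - r ≤ s' := by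
    by_contra hcon
    push_neg at hcon
    set u : ℝ := max ((s' + (astar - r))/2) (astar - ζ) with hudef
    have hu1 : u < astar - r := max_lt (by linarith) (by linarith)
    have hu2 : astar - ζ ≤ u := le_max_right _ _
    have hus : s' < u := lt_of_lt_of_le (by linarith) (le_max_left _ _)
    have habs : |u - astar| ≤ ζ := abs_le.2 ⟨by linarith, by linarith⟩
    have hq' := hclb u habs
    have hFu : cdf' μ u < q := hFlt u (by linarith)
    have h5 : ε < (γ * |u - astar|) ^ (β+1) := by
      rw [← hrpow]
      apply Real.rpow_lt_rpow (by positivity) _ (by linarith)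
      rw [abs_of_nonpos (by linarith : u - astar ≤ 0)]
      have := mul_lt_mul_of_pos_left (show r < -(u - astar) by linarith) hγ
      linarith [this]
    have h6 : cdf' μ u < q - ε := by
      have h7 := lt_of_lt_of_le h5 hq'
      rw [abs_of_nonpos (by linarith : cdf' μ u - q ≤ 0)] at h7
      linarith
    have : u ≤ s' := le_csSup hSlbdd h6
    linarith
  have hs'_ub : ∀ u, s' < u → q - ε ≤ cdf' μ u := by
    intro u hu
    by_contra hcon
    push_neg at hcon
    have : u ≤ s' := le_csSup hSlbdd hcon
    linarith
  have hs'_lb : ∀ u, u < s' → cdf' μ u ≤ q - ε := by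
    intro u hu
    obtain ⟨v, hv, huv⟩ := exists_lt_of_lt_csSup hSlne hu
    have hv' : cdf' μ v < q - ε := hv
    exact le_of_lt (lt_of_le_of_lt (hFmono huv.le) hv')
  have hp' : (μ (Iio s')).toReal ≤ q - ε := meas_Iio_le μ s' (q-ε) (by linarith) hs'_lb
  -- Chernoff events
  have hexpδ : Real.exp (-(2 * n * ε ^ 2)) = δ/2 := by
    rw [hε2, htdef]
    have h1 : 2 * (n:ℝ) * (Real.log (2/δ) / (2*n)) = Real.log (2/δ) := by
      field_simp
    rw [h1, Real.exp_neg, Real.exp_log (by positivity)]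
    rw [inv_div]
  have hgmeas : Measurable (fun z : ℝ => if s < z then (1:ℝ) else 0) :=
    Measurable.ite measurableSet_Ioi measurable_const measurable_const
  have hhmeas : Measurable (fun z : ℝ => if z < s' then (1:ℝ) else 0) :=
    Measurable.ite measurableSet_Iio measurable_const measurable_const
  have h01g : ∀ x : ℝ, (if s < x then (1:ℝ) else 0) ∈ Icc (0:ℝ) 1 := by
    intro x; split_ifs <;> constructor <;> norm_num
  have h01h : ∀ x : ℝ, (if x < s' then (1:ℝ) else 0) ∈ Icc (0:ℝ) 1 := by
    intro x; split_ifs <;> constructor <;> norm_num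
  have hfint : ∫ z, (if z ≤ s then (1:ℝ) else 0) ∂μ = cdf' μ s := by
    have hind : (fun z => if z ≤ s then (1:ℝ) else 0) = (Iic s).indicator (fun _ => (1:ℝ)) := by
      funext z; simp [Set.indicator_apply, mem_Iic]
    rw [hind, integral_indicator_const (1:ℝ) measurableSet_Iic, smul_eq_mul, mul_one]
    rfl
  have hgint : ∫ z, (if s < z then (1:ℝ) else 0) ∂μ ≤ 1 - q - ε := by
    have heqf : (fun z : ℝ => if s < z then (1:ℝ) else 0)
        = fun z => 1 - (if z ≤ s then (1:ℝ) else 0) := by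
      funext z
      rcases le_or_gt z s with h | h
      · rw [if_neg (not_lt.2 h), if_pos h]; norm_num
      · rw [if_pos h, if_neg (not_le.2 h)]; norm_num
    rw [heqf]
    have hfIntg : Integrable (fun z => if z ≤ s then (1:ℝ) else 0) μ := by
      have hmeas : Measurable (fun z : ℝ => if z ≤ s then (1:ℝ) else 0) :=
        Measurable.ite measurableSet_Iic measurable_const measurable_const
      refine (integrable_const (1:ℝ)).mono' hmeas.aestronglyMeasurable (ae_of_all _ fun z => ?_)
      rw [Real.norm_eq_abs]; split_ifs <;> simp
    rw [integral_sub (integrable_const 1) hfIntg, hfint]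
    simp only [integral_const, probReal_univ, ENNReal.toReal_one, smul_eq_mul, mul_one]
    linarith
  have hhint : ∫ z, (if z < s' then (1:ℝ) else 0) ∂μ ≤ q - ε := by
    have hind : (fun z => if z < s' then (1:ℝ) else 0)
        = (Iio s').indicator (fun _ => (1:ℝ)) := by
      funext z; simp [Set.indicator_apply, mem_Iio]
    rw [hind, integral_indicator_const (1:ℝ) measurableSet_Iio, smul_eq_mul, mul_one]
    exact hp'
  have hcher1 := chernoff μ (fun z => if s < z then (1:ℝ) else 0) hgmeas h01g n
    (1 - q - ε) ε hgint hε0.le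
  have hcher2 := chernoff μ (fun z => if z < s' then (1:ℝ) else 0) hhmeas h01h n
    (q - ε) ε hhint hε0.le
  set A : Set (Fin n → ℝ) := {ω | q ≤ empCdf n ω s} with hAdef
  set B : Set (Fin n → ℝ) := {ω | (∑ i, if ω i < s' then (1:ℝ) else 0) < n * q} with hBdef
  have hAc : (iid μ n) Aᶜ ≤ ENNReal.ofReal (δ/2) := by
    rw [← hexpδ]
    refine le_trans (measure_mono ?_) hcher1
    intro ω hω
    have hω' : empCdf n ω s < q := not_le.1 hω
    have hsum : (∑ i, if ω i ≤ s then (1:ℝ) else 0) < n * q := by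
      rw [empCdf, div_lt_iff₀ hn0R] at hω'
      linarith [hω']
    have hgf : (∑ i, if s < ω i then (1:ℝ) else 0)
        = n - ∑ i, (if ω i ≤ s then (1:ℝ) else 0) := by
      rw [eq_sub_iff_add_eq, ← Finset.sum_add_distrib]
      have : ∀ i : Fin n, (if s < ω i then (1:ℝ) else 0) + (if ω i ≤ s then (1:ℝ) else 0) = 1 := by
        intro i
        rcases le_or_gt (ω i) s with h | h
        · rw [if_neg (not_lt.2 h), if_pos h]; norm_num
        · rw [if_pos h, if_neg (not_le.2 h)]; norm_num
      rw [Finset.sum_congr rfl fun i _ => this i]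
      simp
    show (n:ℝ) * ((1 - q - ε) + ε) ≤ ∑ i, if s < ω i then (1:ℝ) else 0
    rw [hgf]
    have : (n:ℝ) * ((1 - q - ε) + ε) = n - n * q := by ring
    rw [this]
    linarith
  have hBc : (iid μ n) Bᶜ ≤ ENNReal.ofReal (δ/2) := by
    rw [← hexpδ]
    refine le_trans (measure_mono ?_) hcher2
    intro ω hω
    have hω' : (n:ℝ) * q ≤ ∑ i, if ω i < s' then (1:ℝ) else 0 := not_lt.1 hω
    show (n:ℝ) * ((q - ε) + ε) ≤ ∑ i, if ω i < s' then (1:ℝ) else 0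
    have : (n:ℝ) * ((q - ε) + ε) = n * q := by ring
    rw [this]
    exact hω'
  -- the good event is contained in the target
  have hsub : A ∩ B ⊆ {ω | expLoss q μ (saa q n ω) - expLoss q μ (optDec q μ)
      ≤ (1/γ) * (Real.log (2/δ) / (2*n)) ^ ((β+2)/(2*β+2))} := by
    rintro ω ⟨hωA, hωB⟩
    have hωA' : q ≤ empCdf n ω s := hωA
    have hωB' : (∑ i, if ω i < s' then (1:ℝ) else 0) < n * q := hωB
    set ahat : ℝ := saa q n ω with hahat
    haveI : Nonempty (Fin n) := Fin.pos_iff_nonempty.1 hn0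
    have hSone : {a : ℝ | 0 ≤ a ∧ q ≤ empCdf n ω a}.Nonempty := by
      set a0 : ℝ := max (Finset.univ.sup' Finset.univ_nonempty ω) 0 with ha0def
      refine ⟨a0, le_max_right _ _, ?_⟩
      have h1 : empCdf n ω a0 = 1 := by
        rw [empCdf]
        rw [Finset.sum_congr rfl fun i _ => if_pos
          (le_trans (Finset.le_sup' ω (Finset.mem_univ i)) (le_max_left _ _))]
        simp
        omega
      rw [h1]; exact hq1.le
    have hahat_le : ahat ≤ s := csInf_le ⟨0, fun a ha => ha.1⟩ ⟨hs0, hωA'⟩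
    have hahat_ge : s' ≤ ahat := by
      by_contra hcon
      push_neg at hcon
      obtain ⟨a, ha, has'⟩ := exists_lt_of_csInf_lt hSone hcon
      have h1 : (n:ℝ) * q ≤ ∑ i, (if ω i ≤ a then (1:ℝ) else 0) := by
        have h2 := ha.2
        rw [empCdf, le_div_iff₀ hn0R] at h2
        linarith [h2]
      have h2 : (∑ i, (if ω i ≤ a then (1:ℝ) else 0)) ≤ ∑ i, (if ω i < s' then (1:ℝ) else 0) := by
        apply Finset.sum_le_sum
        intro i _
        by_cases hi : ω i ≤ a
        · rw [if_pos hi, if_pos (lt_of_le_of_lt hi has')]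
        · rw [if_neg hi]
          split_ifs <;> norm_num
      linarith
    -- regret bound
    have hfinal : ε * r = (1/γ) * (Real.log (2/δ) / (2*n)) ^ ((β+2)/(2*β+2)) := by
      rw [hrdef, ← htdef]
      have h1 : ε * ((1/γ) * ε ^ ((1:ℝ)/(β+1))) = (1/γ) * (ε ^ (1 + (1:ℝ)/(β+1))) := by
        rw [Real.rpow_add hε0, Real.rpow_one]
        ring
      rw [h1, hεdef, ← Real.rpow_mul ht0.le]
      congr 1
      congr 1
      field_simp
      ring
    have hregret : expLoss q μ ahat - expLoss q μ astar ≤ ε * r := by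
      rcases le_total astar ahat with hcase | hcase
      · rw [expLoss_diff q μ hmean astar ahat hcase]
        have hbd := int_Ioc_le astar ahat ε hcase hε0.le (fun u => cdf' μ u - q)
          (cdf'_integrableOn μ q astar ahat) (fun u hu => by
            have h1 : cdf' μ u ≤ q + ε := hs_ub u (lt_of_lt_of_le hu.2 hahat_le)
            show cdf' μ u - q ≤ ε
            linarith)
        calc ∫ u in Ioc astar ahat, (cdf' μ u - q) ≤ ε * (ahat - astar) := hbd
          _ ≤ ε * r := by
            apply mul_le_mul_of_nonneg_left _ hε0.le
            linarith [hahat_le, hs_le]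
      · have hid := expLoss_diff q μ hmean ahat astar hcase
        have hneg : expLoss q μ ahat - expLoss q μ astar
            = ∫ u in Ioc ahat astar, (q - cdf' μ u) := by
          have h1 : ∫ u in Ioc ahat astar, (q - cdf' μ u)
              = - ∫ u in Ioc ahat astar, (cdf' μ u - q) := by
            rw [← integral_neg]
            congr 1
            funext u
            ring
          rw [h1, ← hid]
          ring
        rw [hneg]
        have hint2 : IntegrableOn (fun u => q - cdf' μ u) (Ioc ahat astar) := by
          have h := (cdf'_integrableOn μ q ahat astar).neg
          have heq2 : (fun u => q - cdf' μ u) = (fun u => -(cdf' μ u - q)) := by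
            funext u; ring
          rw [heq2]; exact h
        have hbd := int_Ioc_le ahat astar ε hcase hε0.le (fun u => q - cdf' μ u)
          hint2 (fun u hu => by
            have h1 : q - ε ≤ cdf' μ u := hs'_ub u (lt_of_le_of_lt hahat_ge hu.1)
            show q - cdf' μ u ≤ ε
            linarith)
        calc ∫ u in Ioc ahat astar, (q - cdf' μ u) ≤ ε * (astar - ahat) := hbd
          _ ≤ ε * r := by
            apply mul_le_mul_of_nonneg_left _ hε0.le
            linarith [hahat_ge, hs'_ge]
    rw [mem_setOf_eq, ← hastar, ← hahat, ← htdef]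
    calc expLoss q μ ahat - expLoss q μ astar ≤ ε * r := hregret
      _ = (1/γ) * t ^ ((β+2)/(2*β+2)) := by rw [hfinal, htdef]
  -- probability arithmetic
  haveI : IsProbabilityMeasure (iid μ n) := by
    rw [iid]; infer_instance
  have hcompl : (iid μ n) (A ∩ B)ᶜ ≤ ENNReal.ofReal δ := by
    rw [Set.compl_inter]
    calc (iid μ n) (Aᶜ ∪ Bᶜ) ≤ (iid μ n) Aᶜ + (iid μ n) Bᶜ := measure_union_le _ _
      _ ≤ ENNReal.ofReal (δ/2) + ENNReal.ofReal (δ/2) := add_le_add hAc hBc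
      _ = ENNReal.ofReal δ := by
          rw [← ENNReal.ofReal_add (by positivity) (by positivity)]
          norm_num
  have huniv : (1:ENNReal) ≤ (iid μ n) (A ∩ B) + (iid μ n) (A ∩ B)ᶜ := by
    have h1 : (iid μ n) ((A ∩ B) ∪ (A ∩ B)ᶜ) ≤ (iid μ n) (A ∩ B) + (iid μ n) (A ∩ B)ᶜ :=
      measure_union_le _ _
    rwa [Set.union_compl_self, measure_univ] at h1
  calc ENNReal.ofReal (1 - δ) = 1 - ENNReal.ofReal δ := by
        rw [ENNReal.ofReal_sub 1 hδ0.le, ENNReal.ofReal_one]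
    _ ≤ 1 - (iid μ n) (A ∩ B)ᶜ := tsub_le_tsub_left hcompl 1
    _ ≤ (iid μ n) (A ∩ B) := by
        rw [tsub_le_iff_right]
        rw [add_comm]
        exact le_trans huniv (by rw [add_comm])
    _ ≤ (iid μ n) {ω | expLoss q μ (saa q n ω) - expLoss q μ (optDec q μ)
        ≤ (1/γ) * (Real.log (2/δ) / (2*n)) ^ ((β+2)/(2*β+2))} := measure_mono hsub
end
end
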